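/- For each integer m ≥ 0 and parameter α, the m-th derivative of ((e^t+1)/2)^{−α} at t = 0 equals Σ_{i=0}^{m} ⟨−α⟩_i · S(m,i)/2^i, where ⟨−α⟩_i is the falling factorial and S(m,i) are Stirling numbers of the second kind. -/

import Mathlib

open Finset

/-- Stirling numbers of the second kind `S(n,k)`. -/
def stirling : ℕ → ℕ → ℕ
  | 0, 0 => 1
  | 0, _ + 1 => 0
  | _ + 1, 0 => 0
  | n + 1, k + 1 => (k + 1) * stirling n (k + 1) + stirling n k

/-- The falling factorial `⟨x⟩_i = x (x-1) ⋯ (x-i+1)`, with `⟨x⟩_0 = 1`. -/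
def fallingFac (x : ℝ) (i : ℕ) : ℝ := ∏ k ∈ Finset.range i, (x - k)

/-- The function `(e^t - 1)/t`, extended by the value `1` at `t = 0`. -/
noncomputable def expm1Div (t : ℝ) : ℝ := if t = 0 then 1 else (Real.exp t - 1) / t

/-- The higher-order Bernoulli polynomial `B_n^{(α)}(x)`, defined via the generating
function `(t/(eᵗ-1))^α e^{xt} = ∑ B_n^{(α)}(x) tⁿ/n!`, i.e. as the `n`-th derivative
of `((eᵗ-1)/t)^{-α} e^{xt}` at `t = 0`. -/
noncomputable def higherBernoulli (n : ℕ) (α x : ℝ) : ℝ :=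
  iteratedDeriv n (fun t => expm1Div t ^ (-α) * Real.exp (x * t)) 0

/-- The higher-order Euler polynomial `E_n^{(α)}(x)`, defined via the generating
function `(2/(eᵗ+1))^α e^{xt} = ∑ E_n^{(α)}(x) tⁿ/n!`. -/
noncomputable def higherEuler (n : ℕ) (α x : ℝ) : ℝ :=
  iteratedDeriv n (fun t => ((Real.exp t + 1) / 2) ^ (-α) * Real.exp (x * t)) 0

lemma stirling_eq_zero : ∀ n k : ℕ, n < k → stirling n k = 0 := by
  intro n
  induction n with
  | zero => intro k hk; match k, hk with | k + 1, _ => rfl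
  | succ n ih =>
    intro k hk
    match k, hk with
    | k + 1, hk =>
      show (k + 1) * stirling n (k + 1) + stirling n k = 0
      rw [ih _ (Nat.lt_of_succ_lt hk), ih _ (Nat.lt_of_succ_lt_succ hk)]
      simp

lemma fallingFac_succ (x : ℝ) (i : ℕ) :
    fallingFac x (i + 1) = fallingFac x i * (x - i) := Finset.prod_range_succ _ _

/-- auxiliary function `(e^t/2)^i · ((e^t+1)/2)^(-α-i)`. -/
noncomputable def gAux (α : ℝ) (i : ℕ) (t : ℝ) : ℝ :=
  (Real.exp t / 2) ^ i * ((Real.exp t + 1) / 2) ^ (-α - i)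

lemma hasDerivAt_gAux (α : ℝ) (i : ℕ) (t : ℝ) :
    HasDerivAt (gAux α i)
      ((i : ℝ) * gAux α i t + (-α - i) * gAux α (i + 1) t) t := by
  have hy : (0:ℝ) < (Real.exp t + 1) / 2 := by positivity
  have hx : (0:ℝ) < Real.exp t / 2 := by positivity
  have h1 : HasDerivAt (fun t => Real.exp t / 2) (Real.exp t / 2) t :=
    (Real.hasDerivAt_exp t).div_const 2
  have h2 : HasDerivAt (fun t => (Real.exp t / 2) ^ i)
      ((i : ℝ) * (Real.exp t / 2) ^ i) t := by
    have := h1.fun_pow i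
    refine this.congr_deriv ?_
    rcases i with _ | n
    · simp
    · rw [Nat.add_sub_cancel, pow_succ]
      push_cast; ring
  have hin : HasDerivAt (fun t => (Real.exp t + 1) / 2) (Real.exp t / 2) t :=
    ((Real.hasDerivAt_exp t).add_const 1).div_const 2
  have h3 : HasDerivAt (fun t => ((Real.exp t + 1) / 2) ^ (-α - i))
      (Real.exp t / 2 * (-α - i) * ((Real.exp t + 1) / 2) ^ (-α - i - 1)) t :=
    hin.rpow_const (Or.inl hy.ne')
  have := h2.fun_mul h3
  refine this.congr_deriv ?_
  have hcast : -α - ((i : ℝ) + 1) = -α - i - 1 := by ring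
  simp only [gAux, Nat.cast_add, Nat.cast_one, hcast, pow_succ]
  ring

lemma iteratedDeriv_gAux_sum (α : ℝ) (m : ℕ) :
    ∀ t, iteratedDeriv m (fun t => ((Real.exp t + 1) / 2) ^ (-α)) t =
      ∑ i ∈ Finset.range (m + 1),
        fallingFac (-α) i * (stirling m i : ℝ) * gAux α i t := by
  induction m with
  | zero =>
    intro t
    simp [iteratedDeriv_zero, gAux, fallingFac, stirling]
  | succ m ih =>
    intro t
    rw [iteratedDeriv_succ, funext ih]
    have hd : HasDerivAt
        (fun t => ∑ i ∈ Finset.range (m + 1),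
          fallingFac (-α) i * (stirling m i : ℝ) * gAux α i t)
        (∑ i ∈ Finset.range (m + 1),
          fallingFac (-α) i * (stirling m i : ℝ) *
            ((i : ℝ) * gAux α i t + (-α - i) * gAux α (i + 1) t)) t :=
      HasDerivAt.fun_sum (fun i _ => (hasDerivAt_gAux α i t).const_mul _)
    rw [hd.deriv]
    have key : ∀ i : ℕ, fallingFac (-α) i * (-α - i) = fallingFac (-α) (i + 1) :=
      fun i => (fallingFac_succ _ _).symm
    have expand : ∀ i ∈ Finset.range (m + 1),
        fallingFac (-α) i * (stirling m i : ℝ) *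
          ((i : ℝ) * gAux α i t + (-α - i) * gAux α (i + 1) t)
        = (i : ℝ) * (fallingFac (-α) i * (stirling m i : ℝ) * gAux α i t)
          + fallingFac (-α) (i + 1) * (stirling m i : ℝ) * gAux α (i + 1) t := by
      intro i _
      rw [← key i]; ring
    rw [Finset.sum_congr rfl expand, Finset.sum_add_distrib]
    rw [Finset.sum_range_succ'
      (fun i => fallingFac (-α) i * (stirling (m + 1) i : ℝ) * gAux α i t) (m + 1)]
    have hrec : ∀ i ∈ Finset.range (m + 1),
        fallingFac (-α) (i + 1) * (stirling (m + 1) (i + 1) : ℝ) * gAux α (i + 1) t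
        = (i + 1 : ℝ) * (fallingFac (-α) (i + 1) * (stirling m (i + 1) : ℝ) * gAux α (i + 1) t)
          + fallingFac (-α) (i + 1) * (stirling m i : ℝ) * gAux α (i + 1) t := by
      intro i _
      have : stirling (m + 1) (i + 1) = (i + 1) * stirling m (i + 1) + stirling m i := rfl
      rw [this]
      push_cast
      ring
    rw [Finset.sum_congr rfl hrec, Finset.sum_add_distrib]
    have hz : (stirling (m + 1) 0 : ℝ) = 0 := by norm_cast
    rw [hz]
    have hA : ∑ i ∈ Finset.range (m + 1),
        (i : ℝ) * (fallingFac (-α) i * (stirling m i : ℝ) * gAux α i t)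
        = ∑ i ∈ Finset.range (m + 1),
        (i + 1 : ℝ) * (fallingFac (-α) (i + 1) * (stirling m (i + 1) : ℝ) * gAux α (i + 1) t) := by
      rw [Finset.sum_range_succ'
        (fun i => (i : ℝ) * (fallingFac (-α) i * (stirling m i : ℝ) * gAux α i t)) m]
      rw [Finset.sum_range_succ
        (fun i => (i + 1 : ℝ) * (fallingFac (-α) (i + 1) * (stirling m (i + 1) : ℝ) * gAux α (i + 1) t)) m]
      rw [stirling_eq_zero m (m + 1) (Nat.lt_succ_self m)]
      push_cast
      ring
    rw [hA]
    ring

theorem iteratedDeriv_expAddOneDivTwo_rpow (m : ℕ) (α : ℝ) :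
    iteratedDeriv m (fun t => ((Real.exp t + 1) / 2) ^ (-α)) 0 =
      ∑ i ∈ Finset.range (m + 1), fallingFac (-α) i * (stirling m i : ℝ) / 2 ^ i := by
  rw [iteratedDeriv_gAux_sum α m 0]
  refine Finset.sum_congr rfl fun i _ => ?_
  have : gAux α i 0 = 1 / 2 ^ i := by
    simp [gAux, Real.exp_zero]
  rw [this]
  ring
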